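/- Characterization of incentive systems without Sybil costs (Lemma 5.2): Let U be a real-valued function of pairs (α, s), where α > 0 is a node's own resource power and s is a finite multiset of positive reals (the other nodes' resource powers). Suppose U satisfies: (GR) U(α, s) > 0 for every α > 0 and every finite multiset s of positive reals; (ND) for every finite multiset s of positive reals and every nonempty finite multiset t of positive reals, the sum over the elements x of t (counted with multiplicity) of U(x, s + (t with one copy of x removed)) is at least U(sum of t, s); and (NS, zero Sybil cost) the same sum is at most U(sum of t, s). Then there exists a function F from the positive reals to the positive reals such that U(α, s) = F(α + sum of s) · α for every α > 0 and every finite multiset s of positive reals. Conversely, any U of this form satisfies (GR), (ND) and (NS). -/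

import Mathlib

namespace Stmt0Aux

lemma msum_nonneg {s : Multiset ℝ} (hs : ∀ x ∈ s, (0:ℝ) < x) : 0 ≤ s.sum :=
  Multiset.sum_nonneg (fun x hx => (hs x hx).le)

lemma msum_pos {s : Multiset ℝ} (hs0 : s ≠ 0) (hs : ∀ x ∈ s, (0:ℝ) < x) : 0 < s.sum := by
  obtain ⟨x, hx⟩ := Multiset.exists_mem_of_ne_zero hs0
  have h := Multiset.cons_erase hx
  have h2 : 0 ≤ (s.erase x).sum :=
    msum_nonneg (fun y hy => hs y (Multiset.mem_of_mem_erase hy))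
  have h3 : s.sum = x + (s.erase x).sum := by
    conv_lhs => rw [← h, Multiset.sum_cons]
  rw [h3]; linarith [hs x hx]

lemma erase_pair_right (a b : ℝ) : ((a ::ₘ {b} : Multiset ℝ)).erase b = {a} := by
  by_cases h : b = a
  · subst h; rw [Multiset.erase_cons_head]
  · rw [Multiset.erase_cons_tail _ (Ne.symm h)]; simp

lemma erase_cons_mem {y : ℝ} {s : Multiset ℝ} (h : y ∈ s) (a : ℝ) :
    (a ::ₘ s).erase y = a ::ₘ s.erase y :=
  Multiset.erase_cons_tail_of_mem h

def Eq5 (U : ℝ → Multiset ℝ → ℝ) : Prop :=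
  ∀ s : Multiset ℝ, (∀ x ∈ s, (0:ℝ) < x) →
    ∀ t : Multiset ℝ, t ≠ 0 → (∀ x ∈ t, (0:ℝ) < x) →
      (t.map (fun x => U x (s + t.erase x))).sum = U t.sum s

variable {U : ℝ → Multiset ℝ → ℝ}

lemma pair (hE : Eq5 U) {s : Multiset ℝ} (hs : ∀ x ∈ s, (0:ℝ) < x) {a b : ℝ}
    (ha : 0 < a) (hb : 0 < b) :
    U (a + b) s = U a (b ::ₘ s) + U b (a ::ₘ s) := by
  have ht : ∀ x ∈ (a ::ₘ {b} : Multiset ℝ), (0:ℝ) < x := by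
    intro x hx
    rcases Multiset.mem_cons.1 hx with h | h
    · exact h ▸ ha
    · rw [Multiset.mem_singleton.1 h]; exact hb
  have h := hE s hs (a ::ₘ {b}) (by simp) ht
  rw [Multiset.map_cons, Multiset.sum_cons, Multiset.map_singleton, Multiset.sum_singleton,
    Multiset.erase_cons_head, erase_pair_right, Multiset.sum_cons, Multiset.sum_singleton] at h
  rw [← h]
  have e1 : s + {b} = b ::ₘ s := by rw [add_comm, Multiset.singleton_add]
  have e2 : s + {a} = a ::ₘ s := by rw [add_comm, Multiset.singleton_add]
  rw [e1, e2]

-- collapse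
lemma collapse (hE : Eq5 U) {a : ℝ} (ha : 0 < a) {s : Multiset ℝ} (hs0 : s ≠ 0)
    (hs : ∀ x ∈ s, (0:ℝ) < x) : U a s = U a {s.sum} := by
  have hσ : 0 < s.sum := msum_pos hs0 hs
  have hcons : ∀ x ∈ (a ::ₘ s : Multiset ℝ), (0:ℝ) < x := by
    intro x hx
    rcases Multiset.mem_cons.1 hx with h | h
    · exact h ▸ ha
    · exact hs x h
  have h1 := hE 0 (by simp) (a ::ₘ s) (by simp) hcons
  rw [Multiset.map_cons, Multiset.sum_cons, Multiset.erase_cons_head, zero_add,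
    Multiset.sum_cons] at h1
  -- rewrite the remaining sum
  have hmap : s.map (fun y => U y (0 + (a ::ₘ s).erase y))
      = s.map (fun y => U y ({a} + s.erase y)) := by
    apply Multiset.map_congr rfl
    intro y hy
    rw [zero_add, erase_cons_mem hy, Multiset.singleton_add]
  rw [hmap] at h1
  have h2 := hE {a} (by simpa using ha) s hs0 hs
  have h3 := pair hE (s := 0) (by simp) ha hσ
  -- h3 : U (a + s.sum) 0 = U a (s.sum ::ₘ 0) + U s.sum (a ::ₘ 0)
  have e1 : (s.sum ::ₘ (0:Multiset ℝ)) = ({s.sum} : Multiset ℝ) := rfl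
  have e2 : (a ::ₘ (0:Multiset ℝ)) = ({a} : Multiset ℝ) := rfl
  rw [e1, e2] at h3
  linarith [h1, h2, h3]

end Stmt0Aux

namespace Stmt0Aux

variable {U : ℝ → Multiset ℝ → ℝ}

noncomputable def hfun (U : ℝ → Multiset ℝ → ℝ) (T : ℝ) (a : ℝ) : ℝ :=
  if a = T then U T 0 else U a {T - a}

lemma hfun_pos (hGR : ∀ α : ℝ, 0 < α → ∀ s : Multiset ℝ, (∀ x ∈ s, (0:ℝ) < x) → 0 < U α s)
    {T a : ℝ} (ha : 0 < a) (haT : a ≤ T) : 0 < hfun U T a := by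
  unfold hfun
  by_cases h : a = T
  · rw [if_pos h]; exact hGR T (h ▸ ha) 0 (by simp)
  · rw [if_neg h]
    have : a < T := lt_of_le_of_ne haT h
    exact hGR a ha {T - a} (by intro x hx; rw [Multiset.mem_singleton.1 hx]; linarith)

lemma hfun_add (hE : Eq5 U) {T a b : ℝ} (ha : 0 < a) (hb : 0 < b) (hab : a + b ≤ T) :
    hfun U T (a + b) = hfun U T a + hfun U T b := by
  have haT : a < T := by linarith
  have hbT : b < T := by linarith
  unfold hfun
  rw [if_neg (ne_of_lt haT), if_neg (ne_of_lt hbT)]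
  rcases eq_or_lt_of_le hab with heq | hlt
  · rw [if_pos heq]
    have h3 := pair hE (s := (0:Multiset ℝ)) (by simp) ha hb
    have e1 : T - a = b := by linarith
    have e2 : T - b = a := by linarith
    rw [e1, e2, ← heq]
    simpa using h3
  · rw [if_neg (ne_of_lt hlt)]
    have hc : (0:ℝ) < T - a - b := by linarith
    have hsp : ∀ x ∈ ({T - a - b} : Multiset ℝ), (0:ℝ) < x := by
      intro x hx; rw [Multiset.mem_singleton.1 hx]; exact hc
    have hp := pair hE hsp ha hb
    have c1 := collapse hE ha (s := b ::ₘ {T - a - b}) (by simp)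
      (by intro x hx; rcases Multiset.mem_cons.1 hx with h | h
          · exact h ▸ hb
          · rw [Multiset.mem_singleton.1 h]; exact hc)
    have c2 := collapse hE hb (s := a ::ₘ {T - a - b}) (by simp)
      (by intro x hx; rcases Multiset.mem_cons.1 hx with h | h
          · exact h ▸ ha
          · rw [Multiset.mem_singleton.1 h]; exact hc)
    rw [Multiset.sum_cons, Multiset.sum_singleton] at c1 c2
    have e1 : b + (T - a - b) = T - a := by ring
    have e2 : a + (T - a - b) = T - b := by ring
    rw [e1] at c1; rw [e2] at c2
    have e3 : T - (a + b) = T - a - b := by ring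
    rw [e3, hp, c1, c2]

lemma hfun_nsmul (hE : Eq5 U) {T a : ℝ} (ha : 0 < a) :
    ∀ n : ℕ, ((n:ℝ) + 1) * a ≤ T → hfun U T (((n:ℝ) + 1) * a) = ((n:ℝ) + 1) * hfun U T a := by
  intro n
  induction n with
  | zero => intro _; norm_num
  | succ n ih =>
    intro hle
    have hstep : ((n:ℝ) + 1) * a ≤ T := by
      have : ((n:ℝ) + 1) * a ≤ ((n:ℝ) + 1 + 1) * a := by nlinarith
      push_cast at hle ⊢
      nlinarith
    have hpos : 0 < ((n:ℝ) + 1) * a := by positivity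
    have e : ((n:ℕ):ℝ) + 1 + 1 = ((n:ℝ) + 1) + 1 := by push_cast; ring
    have key : hfun U T ((((n:ℝ) + 1) * a) + a) = hfun U T (((n:ℝ)+1) * a) + hfun U T a := by
      apply hfun_add hE hpos ha
      push_cast at hle
      nlinarith
    push_cast
    have e2 : ((n:ℝ) + 1 + 1) * a = (((n:ℝ) + 1) * a) + a := by ring
    rw [e2, key, ih hstep]
    ring

lemma hfun_mono (hE : Eq5 U)
    (hGR : ∀ α : ℝ, 0 < α → ∀ s : Multiset ℝ, (∀ x ∈ s, (0:ℝ) < x) → 0 < U α s)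
    {T a b : ℝ} (ha : 0 < a) (hab : a < b) (hbT : b ≤ T) :
    hfun U T a < hfun U T b := by
  have h := hfun_add hE ha (b := b - a) (by linarith) (by linarith)
  have hp := hfun_pos (U := U) hGR (T := T) (a := b - a) (by linarith) (by linarith)
  have e : a + (b - a) = b := by ring
  rw [e] at h
  linarith

lemma hfun_rat (hE : Eq5 U) {T : ℝ} (hT : 0 < T) {m n : ℕ} (hm : 0 < m) (hmn : m ≤ n) :
    hfun U T ((m:ℝ) / (n:ℝ) * T) = (m:ℝ) / (n:ℝ) * hfun U T T := by
  have hn : 0 < n := lt_of_lt_of_le hm hmn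
  have hnR : (0:ℝ) < (n:ℝ) := by exact_mod_cast hn
  have hTn : 0 < T / n := by positivity
  obtain ⟨m', rfl⟩ : ∃ m', m = m' + 1 := ⟨m - 1, by omega⟩
  obtain ⟨n', rfl⟩ : ∃ n', n = n' + 1 := ⟨n - 1, by omega⟩
  have h1 : hfun U T (((n':ℝ) + 1) * (T / ((n':ℝ) + 1))) = ((n':ℝ) + 1) * hfun U T (T / ((n':ℝ)+1)) := by
    apply hfun_nsmul hE (by positivity)
    rw [mul_div_cancel₀]
    positivity
  rw [mul_div_cancel₀ _ (by positivity : ((n':ℝ)+1) ≠ 0)] at h1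
  have h2 : hfun U T (((m':ℝ) + 1) * (T / ((n':ℝ) + 1))) = ((m':ℝ) + 1) * hfun U T (T / ((n':ℝ)+1)) := by
    apply hfun_nsmul hE (by positivity)
    have hle : ((m':ℝ) + 1) ≤ ((n':ℝ) + 1) := by exact_mod_cast hmn
    calc ((m':ℝ) + 1) * (T / ((n':ℝ) + 1)) ≤ ((n':ℝ) + 1) * (T / ((n':ℝ) + 1)) := by
          apply mul_le_mul_of_nonneg_right hle (by positivity)
      _ = T := by rw [mul_div_cancel₀]; positivity
  have e : ((m':ℕ)+1:ℕ) = ((m':ℝ) + 1) := by push_cast; ring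
  have e2 : (((m':ℕ)+1:ℕ):ℝ) / (((n':ℕ)+1:ℕ):ℝ) * T = ((m':ℝ)+1) * (T / ((n':ℝ)+1)) := by
    push_cast; ring
  rw [e2, h2]
  have e3 : hfun U T (T / ((n':ℝ)+1)) = hfun U T T / ((n':ℝ)+1) := by
    field_simp at h1 ⊢
    linarith [h1]
  rw [e3]
  push_cast
  ring

end Stmt0Aux

namespace Stmt0Aux

variable {U : ℝ → Multiset ℝ → ℝ}

lemma hfun_ratQ (hE : Eq5 U) {T : ℝ} (hT : 0 < T) {q : ℚ} (hq0 : 0 < q) (hq1 : q < 1) :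
    hfun U T ((q:ℝ) * T) = (q:ℝ) * hfun U T T := by
  have hm : 0 < q.num := Rat.num_pos.2 hq0
  have hmn : q.num.toNat ≤ q.den := by
    have := Rat.num_lt_denom_iff.2 hq1
    omega
  have hm' : 0 < q.num.toNat := by omega
  have hcast : (q:ℝ) = ((q.num.toNat : ℝ)) / ((q.den : ℝ)) := by
    rw [Rat.cast_def]
    congr 1
    exact_mod_cast (Int.toNat_of_nonneg hm.le).symm
  rw [hcast]
  exact hfun_rat hE hT hm' hmn

lemma hfun_linear (hE : Eq5 U)
    (hGR : ∀ α : ℝ, 0 < α → ∀ s : Multiset ℝ, (∀ x ∈ s, (0:ℝ) < x) → 0 < U α s)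
    {T a : ℝ} (hT : 0 < T) (ha : 0 < a) (haT : a ≤ T) :
    hfun U T a = a / T * hfun U T T := by
  rcases eq_or_lt_of_le haT with rfl | haT'
  · rw [div_self (ne_of_gt hT), one_mul]
  have hTT : 0 < hfun U T T := hfun_pos hGR hT le_rfl
  have hr0 : 0 < a / T := by positivity
  have hr1 : a / T < 1 := (div_lt_one hT).2 haT'
  have hfa : 0 < hfun U T a := hfun_pos hGR ha haT
  apply le_antisymm
  · by_contra hcon
    push_neg at hcon
    have hrlt : a / T < hfun U T a / hfun U T T := by
      rw [lt_div_iff₀ hTT]; linarith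
    obtain ⟨q, hq1, hq2⟩ := exists_rat_btwn (lt_min hrlt hr1)
    have hq2a : (q:ℝ) < hfun U T a / hfun U T T := lt_of_lt_of_le hq2 (min_le_left _ _)
    have hq2b : (q:ℝ) < 1 := lt_of_lt_of_le hq2 (min_le_right _ _)
    have hq0 : 0 < q := by exact_mod_cast lt_trans hr0 hq1
    have hq1' : q < 1 := by exact_mod_cast hq2b
    have haqT : a < (q:ℝ) * T := by
      have : a / T * T < (q:ℝ) * T := by
        apply mul_lt_mul_of_pos_right hq1 hT
      rwa [div_mul_cancel₀ _ (ne_of_gt hT)] at this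
    have hqTT : (q:ℝ) * T ≤ T := by nlinarith [hq2b]
    have hmono := hfun_mono hE hGR ha haqT hqTT
    rw [hfun_ratQ hE hT hq0 hq1'] at hmono
    have : (q:ℝ) * hfun U T T < hfun U T a := by
      calc (q:ℝ) * hfun U T T < hfun U T a / hfun U T T * hfun U T T :=
            mul_lt_mul_of_pos_right hq2a hTT
        _ = hfun U T a := by rw [div_mul_cancel₀ _ (ne_of_gt hTT)]
    linarith
  · by_contra hcon
    push_neg at hcon
    have hrgt : hfun U T a / hfun U T T < a / T := by
      rw [div_lt_iff₀ hTT]; linarith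
    have hfrac0 : 0 < hfun U T a / hfun U T T := by positivity
    obtain ⟨q, hq1, hq2⟩ := exists_rat_btwn hrgt
    have hq0 : 0 < q := by exact_mod_cast lt_trans hfrac0 hq1
    have hq1' : q < 1 := by exact_mod_cast lt_trans hq2 hr1
    have hqTa : (q:ℝ) * T < a := by
      have : (q:ℝ) * T < a / T * T := mul_lt_mul_of_pos_right hq2 hT
      rwa [div_mul_cancel₀ _ (ne_of_gt hT)] at this
    have hq0R : (0:ℝ) < (q:ℝ) := by exact_mod_cast hq0
    have hmono := hfun_mono hE hGR (by positivity : (0:ℝ) < (q:ℝ) * T) hqTa haT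
    rw [hfun_ratQ hE hT hq0 hq1'] at hmono
    have : hfun U T a < (q:ℝ) * hfun U T T := by
      calc hfun U T a = hfun U T a / hfun U T T * hfun U T T := by
            rw [div_mul_cancel₀ _ (ne_of_gt hTT)]
        _ < (q:ℝ) * hfun U T T := mul_lt_mul_of_pos_right hq1 hTT
    linarith

end Stmt0Aux

/-- Characterization of incentive systems without Sybil costs (Lemma 5.2):
`U α s` is the utility of a node with resource power `α` when the other nodes'
resource powers form the multiset `s`.  GR ∧ ND ∧ NS hold iff `U` is of the
linear form `U α s = F (α + s.sum) * α` for some positive-valued `F`. -/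
theorem stmt_0 (U : ℝ → Multiset ℝ → ℝ) :
    ((∀ α : ℝ, 0 < α → ∀ s : Multiset ℝ, (∀ x ∈ s, (0:ℝ) < x) → 0 < U α s) ∧
     (∀ s : Multiset ℝ, (∀ x ∈ s, (0:ℝ) < x) →
       ∀ t : Multiset ℝ, t ≠ 0 → (∀ x ∈ t, (0:ℝ) < x) →
         U t.sum s ≤ (t.map (fun x => U x (s + t.erase x))).sum) ∧
     (∀ s : Multiset ℝ, (∀ x ∈ s, (0:ℝ) < x) →
       ∀ t : Multiset ℝ, t ≠ 0 → (∀ x ∈ t, (0:ℝ) < x) →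
         (t.map (fun x => U x (s + t.erase x))).sum ≤ U t.sum s)) ↔
    (∃ F : ℝ → ℝ, (∀ x : ℝ, 0 < x → 0 < F x) ∧
      ∀ α : ℝ, 0 < α → ∀ s : Multiset ℝ, (∀ x ∈ s, (0:ℝ) < x) →
        U α s = F (α + s.sum) * α) := by
  constructor
  · rintro ⟨hGR, hND, hNS⟩
    have hE : Stmt0Aux.Eq5 U := fun s hs t ht0 htp =>
      le_antisymm (hNS s hs t ht0 htp) (hND s hs t ht0 htp)
    refine ⟨fun c => U c 0 / c, ?_, ?_⟩
    · intro x hx; exact div_pos (hGR x hx 0 (by simp)) hx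
    · intro α hα s hs
      by_cases hs0 : s = 0
      · subst hs0
        simp only [Multiset.sum_zero, add_zero]
        rw [div_mul_cancel₀ _ (ne_of_gt hα)]
      · have hσ : 0 < s.sum := Stmt0Aux.msum_pos hs0 hs
        set T := α + s.sum with hT
        have hTpos : 0 < T := by rw [hT]; linarith
        have hαT : α < T := by rw [hT]; linarith
        have hc := Stmt0Aux.collapse hE hα hs0 hs
        have h1 : Stmt0Aux.hfun U T α = U α {s.sum} := by
          unfold Stmt0Aux.hfun
          rw [if_neg (ne_of_lt hαT)]
          have : T - α = s.sum := by rw [hT]; ring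
          rw [this]
        have h2 := Stmt0Aux.hfun_linear hE hGR hTpos hα (le_of_lt hαT)
        have h3 : Stmt0Aux.hfun U T T = U T 0 := by
          unfold Stmt0Aux.hfun; rw [if_pos rfl]
        rw [hc, ← h1, h2, h3]
        ring
  · rintro ⟨F, hF, hU⟩
    have key : ∀ s : Multiset ℝ, (∀ x ∈ s, (0:ℝ) < x) →
        ∀ t : Multiset ℝ, t ≠ 0 → (∀ x ∈ t, (0:ℝ) < x) →
          (t.map (fun x => U x (s + t.erase x))).sum = U t.sum s := by
      intro s hs t ht0 htp
      have htsum : 0 < t.sum := Stmt0Aux.msum_pos ht0 htp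
      have hmap : t.map (fun x => U x (s + t.erase x))
          = t.map (fun x => F (t.sum + s.sum) * x) := by
        apply Multiset.map_congr rfl
        intro x hx
        have hx0 := htp x hx
        have hpos : ∀ y ∈ s + t.erase x, (0:ℝ) < y := by
          intro y hy
          rcases Multiset.mem_add.1 hy with h | h
          · exact hs y h
          · exact htp y (Multiset.mem_of_mem_erase h)
        rw [hU x hx0 _ hpos]
        have hesum : (t.erase x).sum = t.sum - x := by
          have hce := Multiset.cons_erase hx
          have h2 : t.sum = x + (t.erase x).sum := by
            conv_lhs => rw [← hce, Multiset.sum_cons]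
          linarith
        have harg : x + (s + t.erase x).sum = t.sum + s.sum := by
          rw [Multiset.sum_add, hesum]; ring
        rw [harg]
      rw [hmap, Multiset.sum_map_mul_left]
      have hid : (t.map (fun x => x)).sum = t.sum := by rw [Multiset.map_id']
      rw [hid, hU t.sum htsum s hs]
    refine ⟨?_, ?_, ?_⟩
    · intro α hα s hs
      rw [hU α hα s hs]
      have : 0 < α + s.sum := by linarith [Stmt0Aux.msum_nonneg hs]
      exact mul_pos (hF _ this) hα
    · intro s hs t ht0 htp
      rw [key s hs t ht0 htp]
    · intro s hs t ht0 htp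
      rw [key s hs t ht0 htp]
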